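/- Let a, b, c be integers with a > 0, a ≡ 1 (mod 4), b odd, and b² − ac = −1, and set Q(n,m) = an² − 2bnm + cm² (so that Q(n,m) = |na − m(b+i)|²/a). Then the following equalities of subsets of ℤ hold: {Q(n,m) : n, m both even} = {n² + m² : n, m both even}; {Q(n,m) : n odd, m even} = {n² + m² : n even, m odd}; {Q(n,m) : n even, m odd} = {n² + m² : n, m both odd}; {Q(n,m) : n, m both odd} = {n² + m² : n odd, m even}. -/
import Mathlib


open Zsqrtd

local notation "ℤ[i]" => GaussianInt

lemma norm_dvd_of_dvd {z w : ℤ[i]} (h : z ∣ w) : z.norm ∣ w.norm := by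
  obtain ⟨k, rfl⟩ := h
  exact ⟨k.norm, (Zsqrtd.norm_mul z k)⟩

lemma exists_uvst (a b c : ℤ) (ha : 0 < a) (haodd : a % 2 = 1) (hdet : b ^ 2 - a * c = -1) :
    ∃ u v s t : ℤ, u ^ 2 + v ^ 2 = a ∧ s ^ 2 + t ^ 2 = c ∧ u * s + v * t = b ∧
      v * s - u * t = 1 := by
  set A : ℤ[i] := (a : ℤ[i]) with hAdef
  set B : ℤ[i] := ⟨b, 1⟩ with hBdef
  have hstarA : star A = A := by
    rw [hAdef]; ext <;> simp
  have hnormB : B.norm = a * c := by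
    rw [Zsqrtd.norm_def]; simp only [hBdef]; nlinarith [hdet]
  have hBB : B * star B = A * (c : ℤ[i]) := by
    rw [← Zsqrtd.norm_eq_mul_conj, hnormB, hAdef]
    push_cast
    ring
  set d : ℤ[i] := EuclideanDomain.gcd A B with hddef
  have hdA : d ∣ A := EuclideanDomain.gcd_dvd_left A B
  have hdB : d ∣ B := EuclideanDomain.gcd_dvd_right A B
  have hstardB : star d ∣ star B := by
    obtain ⟨k, hk⟩ := hdB
    exact ⟨star k, by rw [hk, star_mul, mul_comm]⟩
  -- a ∣ norm d via Bezout
  set x : ℤ[i] := EuclideanDomain.gcdA A B with hxdef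
  set y : ℤ[i] := EuclideanDomain.gcdB A B with hydef
  have hbez : d = A * x + B * y := EuclideanDomain.gcd_eq_gcd_ab A B
  have hstard : star d = A * star x + star B * star y := by
    rw [hbez, star_add, star_mul, star_mul, hstarA]; ring
  have hAdvd : A ∣ d * star d := by
    refine ⟨x * (A * star x) + x * (star B * star y) + B * (y * star x) +
      (c : ℤ[i]) * (y * star y), ?_⟩
    rw [hstard, hbez]
    linear_combination (y * star y) * hBB
  -- coprimality of d and star d
  have hstardA : star d ∣ A := by
    obtain ⟨e, he⟩ := hdA
    exact ⟨star e, by rw [← hstarA, he, star_mul, mul_comm]⟩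
  have hcop : IsCoprime d (star d) := by
    rw [← EuclideanDomain.gcd_isUnit_iff]
    set g : ℤ[i] := EuclideanDomain.gcd d (star d) with hgdef
    have hg1 : g ∣ d := EuclideanDomain.gcd_dvd_left _ _
    have hg2 : g ∣ star d := EuclideanDomain.gcd_dvd_right _ _
    have hg4 : g.norm ∣ 4 := by
      have h2i : g ∣ (⟨0, 2⟩ : ℤ[i]) := by
        have h0 : (⟨0, 2⟩ : ℤ[i]) = B - star B := by ext <;> simp [hBdef]
        rw [h0]
        exact dvd_sub (hg1.trans hdB) (hg2.trans hstardB)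
      have := norm_dvd_of_dvd h2i
      simpa [Zsqrtd.norm_def] using this
    have hgaa : g.norm ∣ a * a := by
      have := norm_dvd_of_dvd (hg1.trans hdA)
      rwa [hAdef, Zsqrtd.norm_intCast] at this
    have hgnonneg : 0 ≤ g.norm := Zsqrtd.norm_nonneg (by norm_num) g
    have hgodd : g.norm % 2 = 1 := by
      obtain ⟨k, hk⟩ := hgaa
      have haa : (a * a) % 2 = 1 := by
        rw [Int.mul_emod, haodd]
        norm_num
      have h2 : (g.norm * k) % 2 = (g.norm % 2) * (k % 2) % 2 := Int.mul_emod _ _ _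
      rw [← hk] at h2
      rcases Int.emod_two_eq g.norm with h0 | h1
      · exfalso
        rw [h0] at h2
        simp at h2
        omega
      · exact h1
    have hgone : g.norm = 1 := by
      have hcop2 : IsCoprime g.norm (4 : ℤ) := by
        obtain ⟨k, hk⟩ : Odd g.norm := Int.odd_iff.mpr hgodd
        exact ⟨g.norm, -(k * k + k), by rw [hk]; ring⟩
      have hu : IsUnit g.norm := hcop2.isUnit_of_dvd hg4
      rcases Int.isUnit_iff.mp hu with h | h
      · exact h
      · omega
    rw [← Zsqrtd.norm_eq_one_iff, hgone]
    rfl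
  have hdd_dvd_A : d * star d ∣ A := hcop.mul_dvd hdA hstardA
  have hnorm_dvd_a : d.norm ∣ a := by
    have : (d.norm : ℤ[i]) ∣ (a : ℤ[i]) := by
      rw [Zsqrtd.norm_eq_mul_conj]; exact hdd_dvd_A
    exact (Zsqrtd.intCast_dvd_intCast _ _).mp this
  have ha_dvd_norm : a ∣ d.norm := by
    have : (a : ℤ[i]) ∣ (d.norm : ℤ[i]) := by
      rw [Zsqrtd.norm_eq_mul_conj]; exact hAdvd
    exact (Zsqrtd.intCast_dvd_intCast _ _).mp this
  have hnorm_eq : d.norm = a :=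
    Int.dvd_antisymm (Zsqrtd.norm_nonneg (by norm_num) d) (le_of_lt ha) hnorm_dvd_a ha_dvd_norm
  -- extract components
  obtain ⟨f, hf⟩ := hdB
  have hnormf : f.norm = c := by
    have h1 : B.norm = d.norm * f.norm := by rw [hf, Zsqrtd.norm_mul]
    rw [hnormB, hnorm_eq] at h1
    exact (mul_left_cancel₀ (ne_of_gt ha) h1).symm
  have hre : b = d.re * f.re + (-1) * d.im * f.im := by
    have := congrArg Zsqrtd.re hf
    simpa [hBdef, Zsqrtd.re_mul] using this
  have him : 1 = d.re * f.im + d.im * f.re := by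
    have := congrArg Zsqrtd.im hf
    simpa [hBdef, Zsqrtd.im_mul] using this
  have hda : d.re * d.re + d.im * d.im = a := by
    have h := Zsqrtd.norm_def d
    rw [hnorm_eq] at h
    linarith
  have hfc : f.re * f.re + f.im * f.im = c := by
    have h := Zsqrtd.norm_def f
    rw [hnormf] at h
    linarith
  exact ⟨d.re, d.im, f.re, -f.im, by linear_combination hda, by linear_combination hfc,
    by linear_combination -hre, by linear_combination -him⟩



/-- **Parity lemma (b odd)**: for `a > 0`, `a ≡ 1 (mod 4)`, `b` odd and `b² − ac = −1`,
the quadratic form `Q(n,m) = an² − 2bnm + cm²` represents, on each parity class of `(n,m)`,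
exactly the values of `n² + m²` on the indicated parity class. -/
theorem parity_lemma_odd (a b c : ℤ) (ha : 0 < a) (ha4 : a % 4 = 1) (hb : Odd b)
    (hdet : b ^ 2 - a * c = -1) :
    ({x : ℤ | ∃ n m : ℤ, Even n ∧ Even m ∧ a * n ^ 2 - 2 * b * n * m + c * m ^ 2 = x} =
        {x : ℤ | ∃ n m : ℤ, Even n ∧ Even m ∧ n ^ 2 + m ^ 2 = x}) ∧
    ({x : ℤ | ∃ n m : ℤ, Odd n ∧ Even m ∧ a * n ^ 2 - 2 * b * n * m + c * m ^ 2 = x} =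
        {x : ℤ | ∃ n m : ℤ, Even n ∧ Odd m ∧ n ^ 2 + m ^ 2 = x}) ∧
    ({x : ℤ | ∃ n m : ℤ, Even n ∧ Odd m ∧ a * n ^ 2 - 2 * b * n * m + c * m ^ 2 = x} =
        {x : ℤ | ∃ n m : ℤ, Odd n ∧ Odd m ∧ n ^ 2 + m ^ 2 = x}) ∧
    ({x : ℤ | ∃ n m : ℤ, Odd n ∧ Odd m ∧ a * n ^ 2 - 2 * b * n * m + c * m ^ 2 = x} =
        {x : ℤ | ∃ n m : ℤ, Odd n ∧ Even m ∧ n ^ 2 + m ^ 2 = x}) := by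
  have haodd : a % 2 = 1 := by omega
  obtain ⟨u, v, s, t, hua, hsc, hbb, h1, huo, hve⟩ :
      ∃ u v s t : ℤ, u ^ 2 + v ^ 2 = a ∧ s ^ 2 + t ^ 2 = c ∧ u * s + v * t = b ∧
        v * s - u * t = 1 ∧ Odd u ∧ Even v := by
    obtain ⟨u, v, s, t, hua, hsc, hbb, h1⟩ := exists_uvst a b c ha haodd hdet
    have hpar : (u % 2 = 1 ∧ v % 2 = 0) ∨ (u % 2 = 0 ∧ v % 2 = 1) := by
      have h1u := Int.mul_emod u u 2
      have h1v := Int.mul_emod v v 2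
      have e1 : u ^ 2 = u * u := sq u
      have e2 : v ^ 2 = v * v := sq v
      rcases Int.emod_two_eq u with h | h <;> rcases Int.emod_two_eq v with h' | h' <;>
          rw [h] at h1u <;> rw [h'] at h1v <;> norm_num at h1u h1v <;> omega
    rcases hpar with ⟨h, h'⟩ | ⟨h, h'⟩
    · exact ⟨u, v, s, t, hua, hsc, hbb, h1, Int.odd_iff.mpr h, Int.even_iff.mpr h'⟩
    · refine ⟨-v, u, -t, s, by linear_combination hua, by linear_combination hsc,
        by linear_combination hbb, by linear_combination h1,
        (Int.odd_iff.mpr h').neg, Int.even_iff.mpr h⟩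
  have ht : Odd t := by
    have hut : Odd (u * t) := by
      have h2 : u * t = v * s - 1 := by linarith
      rw [h2]
      exact (hve.mul_right s).sub_odd odd_one
    exact (Int.odd_mul.mp hut).2
  have hs : Odd s := by
    have hus : Odd (u * s) := by
      have h2 : u * s = b - v * t := by linarith
      rw [h2]
      exact hb.sub_even (hve.mul_right t)
    exact (Int.odd_mul.mp hus).2
  have hfwd : ∀ n m : ℤ, a * n ^ 2 - 2 * b * n * m + c * m ^ 2 =
      (n * u - m * s) ^ 2 + (n * v - m * t) ^ 2 := by
    intro n m
    linear_combination (-(n ^ 2)) * hua + 2 * n * m * hbb - m ^ 2 * hsc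
  have hbwd : ∀ X Y : ℤ, a * (s * Y - t * X) ^ 2 - 2 * b * (s * Y - t * X) * (u * Y - v * X) +
      c * (u * Y - v * X) ^ 2 = X ^ 2 + Y ^ 2 := by
    intro X Y
    rw [hfwd (s * Y - t * X) (u * Y - v * X)]
    have e1 : (s * Y - t * X) * u - (u * Y - v * X) * s = X * (v * s - u * t) := by ring
    have e2 : (s * Y - t * X) * v - (u * Y - v * X) * t = Y * (v * s - u * t) := by ring
    rw [e1, e2, h1]
    ring
  refine ⟨?_, ?_, ?_, ?_⟩
  · ext z
    simp only [Set.mem_setOf_eq]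
    constructor
    · rintro ⟨n, m, hn, hm, rfl⟩
      exact ⟨n * u - m * s, n * v - m * t, (hn.mul_right u).sub (hm.mul_right s),
        (hn.mul_right v).sub (hm.mul_right t), (hfwd n m).symm⟩
    · rintro ⟨n, m, hn, hm, rfl⟩
      exact ⟨s * m - t * n, u * m - v * n, (hm.mul_left s).sub (hn.mul_left t),
        (hm.mul_left u).sub (hn.mul_left v), hbwd n m⟩
  · ext z
    simp only [Set.mem_setOf_eq]
    constructor
    · rintro ⟨n, m, hn, hm, rfl⟩
      exact ⟨n * v - m * t, n * u - m * s, (hve.mul_left n).sub (hm.mul_right t),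
        (hn.mul huo).sub_even (hm.mul_right s), by linear_combination -(hfwd n m)⟩
    · rintro ⟨n, m, hn, hm, rfl⟩
      exact ⟨s * n - t * m, u * n - v * m, (hn.mul_left s).sub_odd (ht.mul hm),
        (hn.mul_left u).sub (hve.mul_right m), by linear_combination hbwd m n⟩
  · ext z
    simp only [Set.mem_setOf_eq]
    constructor
    · rintro ⟨n, m, hn, hm, rfl⟩
      exact ⟨n * u - m * s, n * v - m * t, (hn.mul_right u).sub_odd (hm.mul hs),
        (hn.mul_right v).sub_odd (hm.mul ht), (hfwd n m).symm⟩
    · rintro ⟨n, m, hn, hm, rfl⟩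
      exact ⟨s * m - t * n, u * m - v * n, (hs.mul hm).sub_odd (ht.mul hn),
        (huo.mul hm).sub_even (hve.mul_right n), hbwd n m⟩
  · ext z
    simp only [Set.mem_setOf_eq]
    constructor
    · rintro ⟨n, m, hn, hm, rfl⟩
      exact ⟨n * v - m * t, n * u - m * s, (hve.mul_left n).sub_odd (hm.mul ht),
        (hn.mul huo).sub_odd (hm.mul hs), by linear_combination -(hfwd n m)⟩
    · rintro ⟨n, m, hn, hm, rfl⟩
      exact ⟨s * n - t * m, u * n - v * m, (hs.mul hn).sub_even (hm.mul_left t),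
        (huo.mul hn).sub_even (hve.mul_right m), by linear_combination hbwd m n⟩
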